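/- For every positive integer n and all integers k₁, k₂: (n divides 2k₁ − 3k₂ and n divides −3k₁ + 6k₂) if and only if (n divides k₁ and n / gcd(n, 3) divides k₂). -/

import Mathlib

lemma aux_g2 (n : ℕ) (hn : 0 < n) (k : ℤ) :
    (n : ℤ) ∣ 3 * k ↔ ((n / Nat.gcd n 3 : ℕ) : ℤ) ∣ k := by
  have hd : Nat.gcd n 3 ∣ 3 := Nat.gcd_dvd_right n 3
  rcases Nat.prime_three.eq_one_or_self_of_dvd _ hd with h | h
  · rw [h, Nat.div_one]
    have hc : IsCoprime (n : ℤ) 3 := by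
      rw [Int.isCoprime_iff_gcd_eq_one]; exact (Int.gcd_natCast_natCast n 3).trans h
    constructor
    · intro hdvd; exact hc.dvd_of_dvd_mul_left hdvd
    · intro hdvd; exact hdvd.mul_left 3
  · rw [h]
    have h3 : 3 ∣ n := h ▸ Nat.gcd_dvd_left n 3
    obtain ⟨m, rfl⟩ := h3
    have : (3 * m) / 3 = m := by omega
    rw [this]
    push_cast
    constructor
    · rintro ⟨c, hc⟩
      exact ⟨c, by linarith⟩
    · rintro ⟨c, hc⟩
      exact ⟨c, by rw [hc]; ring⟩

/-- The `G₂` computation: for `n ≥ 1` and integers `k₁, k₂`, one has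
`n ∣ 2k₁ - 3k₂` and `n ∣ -3k₁ + 6k₂` iff `n ∣ k₁` and `n / gcd(n,3) ∣ k₂`. -/
theorem G2_YQn_eq_YQn_sc (n : ℕ) (hn : 0 < n) (k₁ k₂ : ℤ) :
    ((n : ℤ) ∣ 2 * k₁ - 3 * k₂ ∧ (n : ℤ) ∣ -3 * k₁ + 6 * k₂) ↔
      ((n : ℤ) ∣ k₁ ∧ ((n / Nat.gcd n 3 : ℕ) : ℤ) ∣ k₂) := by
  constructor
  · rintro ⟨h1, h2⟩
    have hk1 : (n : ℤ) ∣ k₁ := by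
      have : k₁ = 2 * (2 * k₁ - 3 * k₂) + (-3 * k₁ + 6 * k₂) := by ring
      rw [this]; exact dvd_add (Dvd.dvd.mul_left h1 2) h2
    refine ⟨hk1, (aux_g2 n hn k₂).mp ?_⟩
    have : 3 * k₂ = 2 * k₁ - (2 * k₁ - 3 * k₂) := by ring
    rw [this]; exact dvd_sub (hk1.mul_left 2) h1
  · rintro ⟨h1, h2⟩
    have h3 : (n : ℤ) ∣ 3 * k₂ := (aux_g2 n hn k₂).mpr h2
    constructor
    · have : 2 * k₁ - 3 * k₂ = 2 * k₁ - (3 * k₂) := by ring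
      rw [this]; exact dvd_sub (h1.mul_left 2) h3
    · have : -3 * k₁ + 6 * k₂ = (-3) * k₁ + 2 * (3 * k₂) := by ring
      rw [this]; exact dvd_add (h1.mul_left (-3)) (h3.mul_left 2)
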